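/- arXiv:2002.01968 — 2 statements merged into one kernel-verified Lean document; each statement's English description precedes it below -/
import Mathlib

section
/- Let k ≥ 1 and n ≥ 1 be integers and let w be a word over a k-letter alphabet Σ_k such that no length-n word has two disjoint occurrences in w. Then |w| ≤ (Σ_{x ∈ Σ_k^n} ⌈n / per(x)⌉) + n - 1, where the sum runs over all k^n words x of length n over Σ_k. -/
/-- `x` occurs in `w` at position `i`: `w[i..i+|x|-1] = x`. -/
def Occurs {α : Type*} (x w : List α) (i : ℕ) : Prop := x <+: w.drop i

/-- `w` contains two disjoint occurrences of `x`. -/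
def TwoDisjointOccs {α : Type*} (x w : List α) : Prop :=
  ∃ i j : ℕ, Occurs x w i ∧ Occurs x w j ∧ i + x.length ≤ j

/-- `w` has period `q ≥ 1`: `w[i] = w[i+q]` whenever both are defined. -/
def HasPeriod {α : Type*} (w : List α) (q : ℕ) : Prop :=
  1 ≤ q ∧ ∀ (i : ℕ) (h : i + q < w.length), w.get ⟨i, by omega⟩ = w.get ⟨i + q, h⟩

/-- The smallest period of `w`. -/
noncomputable def minPeriod {α : Type*} (w : List α) : ℕ := sInf {q | HasPeriod w q}

/-- A word is primitive if it is nonempty and not a proper power. -/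
def Primitive {α : Type*} (w : List α) : Prop :=
  w ≠ [] ∧ ∀ (x : List α) (m : ℕ), 2 ≤ m → w ≠ (List.replicate m x).flatten

/-- `x` is a border of `w`. -/
def IsBorder {α : Type*} (x w : List α) : Prop :=
  x ≠ [] ∧ x ≠ w ∧ x <+: w ∧ x <:+ w

def Unbordered {α : Type*} (w : List α) : Prop := ∀ x, ¬ IsBorder x w

/-- An overlap: a word of the form `a x a x a`. -/
def IsOverlap {α : Type*} (u : List α) : Prop :=
  ∃ (a : α) (x : List α), u = [a] ++ x ++ [a] ++ x ++ [a]

/-- A `t`-overlap: a word of the form `x x x'` where `x` is nonempty of length ≥ t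
and `x'` is the prefix of `x` of length `t`. -/
def IsTOverlap {α : Type*} (t : ℕ) (u : List α) : Prop :=
  ∃ x : List α, x ≠ [] ∧ t ≤ x.length ∧ u = x ++ x ++ x.take t

/-- `w` contains a split occurrence of a `t`-overlap: a factor `x y z` with `x z` a `t`-overlap. -/
def HasSplitTOverlap {α : Type*} (t : ℕ) (w : List α) : Prop :=
  ∃ x y z : List α, (x ++ y ++ z) <:+: w ∧ IsTOverlap t (x ++ z)

/-- `w` contains a reversed split occurrence of a `t`-overlap:
a factor `x y z` with `z x` a `t`-overlap. -/
def HasRevSplitTOverlap {α : Type*} (t : ℕ) (w : List α) : Prop :=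
  ∃ x y z : List α, (x ++ y ++ z) <:+: w ∧ IsTOverlap t (z ++ x)

lemma hasPeriod_length {α : Type*} (x : List α) (hx : 1 ≤ x.length) :
    HasPeriod x x.length := ⟨hx, fun i hi => absurd hi (by omega)⟩

lemma minPeriod_hasPeriod {α : Type*} (x : List α) (hx : 1 ≤ x.length) :
    HasPeriod x (minPeriod x) := by
  have hne : x.length ∈ {q | HasPeriod x q} := hasPeriod_length x hx
  exact Nat.sInf_mem ⟨_, hne⟩

lemma occurs_getElem {α : Type*} {x w : List α} {i t : ℕ} (h : Occurs x w i)
    (ht : t < x.length) :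
    ∃ (hw : i + t < w.length), x[t] = w[i + t] := by
  have hlen : x.length ≤ (w.drop i).length := h.length_le
  simp only [List.length_drop] at hlen
  have hw : i + t < w.length := by omega
  refine ⟨hw, ?_⟩
  have h1 : x[t] = (w.drop i)[t]'(by simp; omega) := h.getElem ht
  rw [h1, List.getElem_drop]

lemma hasPeriod_of_overlap {α : Type*} {x w : List α} {i j : ℕ}
    (hi : Occurs x w i) (hj : Occurs x w j) (hij : i < j) :
    HasPeriod x (j - i) := by
  refine ⟨by omega, fun t ht => ?_⟩
  simp only [List.get_eq_getElem]
  obtain ⟨hw1, e1⟩ := occurs_getElem hj (show t < x.length by omega)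
  obtain ⟨hw2, e2⟩ := occurs_getElem hi ht
  rw [e1, e2]
  congr 1
  omega

lemma card_le_of_spread {s : Finset ℕ} {p n : ℕ} (hp : 1 ≤ p) (hn : 1 ≤ n)
    (hs : ∀ i ∈ s, ∀ j ∈ s, i < j → p ≤ j - i ∧ j - i < n) :
    s.card ≤ (n + p - 1) / p := by
  rcases s.eq_empty_or_nonempty with rfl | hne
  · simp
  have hm := s.min'_mem hne
  set m := s.min' hne with hmdef
  have key : s.card ≤ (Finset.range ((n + p - 1) / p)).card := by
    apply Finset.card_le_card_of_injOn (fun i => (i - m) / p)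
    · intro i hi
      simp only [Finset.mem_coe, Finset.mem_range]
      have h1 : i - m ≤ n - 1 := by
        rcases eq_or_lt_of_le (s.min'_le i hi) with heq | hlt
        · omega
        · exact Nat.le_sub_one_of_lt (hs m hm i hi hlt).2
      calc (i - m) / p ≤ (n - 1) / p := Nat.div_le_div_right h1
        _ < (n - 1) / p + 1 := Nat.lt_succ_self _
        _ = (n - 1 + p) / p := (Nat.add_div_right _ hp).symm
        _ = (n + p - 1) / p := by rw [show n - 1 + p = n + p - 1 by omega]
    · intro i hi j hj hij
      rw [Finset.mem_coe] at hi hj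
      have hij' : (i - m) / p = (j - m) / p := hij
      by_contra hne2
      clear hij
      wlog hlt : i < j generalizing i j
      · exact this hj hi hij'.symm (Ne.symm hne2) (by omega)
      have h2 := hs i hi j hj hlt
      have hmi : m ≤ i := s.min'_le i hi
      have : (i - m) / p + 1 ≤ (j - m) / p := by
        calc (i - m) / p + 1 = (i - m + p) / p := (Nat.add_div_right _ hp).symm
          _ ≤ (j - m) / p := Nat.div_le_div_right (by omega)
      omega
  simpa using key

theorem length_bound_of_no_disjoint_occurrences (k n : ℕ) (hk : 1 ≤ k) (hn : 1 ≤ n)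
    (w : List (Fin k))
    (h : ∀ x : List (Fin k), x.length = n → ¬ TwoDisjointOccs x w) :
    w.length ≤
      (∑ f : Fin n → Fin k,
        (n + minPeriod (List.ofFn f) - 1) / minPeriod (List.ofFn f)) + n - 1 := by
  by_cases hcase : w.length < n
  · calc w.length ≤ n - 1 := by omega
      _ ≤ _ := Nat.sub_le_sub_right (Nat.le_add_left n _) 1
  push_neg at hcase
  set L := w.length with hL
  set F : ℕ → (Fin n → Fin k) := fun i t => w.getD (i + t.1) ⟨0, hk⟩ with hF
  have hocc : ∀ i ∈ Finset.range (L - n + 1), Occurs (List.ofFn (F i)) w i := by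
    intro i hi
    rw [Finset.mem_range] at hi
    have hin : i + n ≤ L := by omega
    have heq : List.ofFn (F i) = (w.drop i).take n := by
      apply List.ext_getElem
      · simp [hL]; omega
      · intro t h1 h2
        simp only [List.length_ofFn] at h1
        simp only [List.getElem_ofFn, List.getElem_take, List.getElem_drop, hF]
        rw [List.getD_eq_getElem w ⟨0, hk⟩ (by omega)]
    rw [Occurs, heq]
    exact List.take_prefix _ _
  have key : ∀ f : Fin n → Fin k,
      ((Finset.range (L - n + 1)).filter (fun i => F i = f)).card
        ≤ (n + minPeriod (List.ofFn f) - 1) / minPeriod (List.ofFn f) := by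
    intro f
    set x := List.ofFn f with hx
    have hxlen : x.length = n := by simp [hx]
    have hp := minPeriod_hasPeriod x (by omega)
    apply card_le_of_spread hp.1 hn
    intro i hi j hj hij
    rw [Finset.mem_filter] at hi hj
    have hoi : Occurs x w i := by rw [hx, ← hi.2]; exact hocc i hi.1
    have hoj : Occurs x w j := by rw [hx, ← hj.2]; exact hocc j hj.1
    refine ⟨?_, ?_⟩
    · have hper := hasPeriod_of_overlap hoi hoj hij
      have hmem : j - i ∈ {q | HasPeriod x q} := hper
      exact Nat.sInf_le hmem
    · rw [← hxlen]
      by_contra hge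
      exact h x hxlen ⟨i, j, hoi, hoj, by omega⟩
  have hcount : (Finset.range (L - n + 1)).card
      = ∑ f : Fin n → Fin k, ((Finset.range (L - n + 1)).filter (fun i => F i = f)).card :=
    Finset.card_eq_sum_card_fiberwise (fun i _ => Finset.mem_univ (F i))
  have hsum : L - n + 1
      ≤ ∑ f : Fin n → Fin k, (n + minPeriod (List.ofFn f) - 1) / minPeriod (List.ofFn f) := by
    rw [← Finset.card_range (L - n + 1), hcount]
    exact Finset.sum_le_sum (fun f _ => key f)
  set S := ∑ f : Fin n → Fin k, (n + minPeriod (List.ofFn f) - 1) / minPeriod (List.ofFn f) with hS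
  omega
end

section
/- Let k ≥ 1, t ≥ 1, M ≥ t and N be integers such that (i) every word over a k-letter alphabet of length strictly greater than M contains two disjoint occurrences of some word of length t, and (ii) every word over the same alphabet of length strictly greater than N contains two disjoint occurrences of some word of length M + 1. Then every word over that alphabet of length strictly greater than N contains a split occurrence of a t-overlap. (In the paper's notation, S(k,t) ≤ C(k, C(k,t) + 1).) -/
lemma occurs_len {α : Type*} {x w : List α} {i : ℕ} (h : Occurs x w i) (hx : x ≠ []) :
    i + x.length ≤ w.length := by
  have h1 : x <+: w.drop i := h
  have h2 := h1.length_le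
  have h3 : 0 < x.length := List.length_pos_iff.mpr hx
  simp [List.length_drop] at h2
  omega

lemma occurs_get {α : Type*} {x w : List α} {i : ℕ} (h : Occurs x w i)
    (r : ℕ) (hr : r < x.length) (hw : i + r < w.length) :
    x[r] = w[i + r] := by
  have h' : x <+: w.drop i := h
  have hx : x = (w.drop i).take x.length := by
    rw [List.prefix_iff_eq_take] at h'; exact h'
  rw [List.getElem_of_eq hx hr]
  simp [List.getElem_take, List.getElem_drop]

lemma seg_len {α : Type*} (w : List α) (a n : ℕ) (h : a + n ≤ w.length) :
    ((w.drop a).take n).length = n := by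
  simp [List.length_take, List.length_drop]; omega

lemma seg_append {α : Type*} (w : List α) (a n m : ℕ) :
    (w.drop a).take n ++ (w.drop (a + n)).take m = (w.drop a).take (n + m) := by
  have hd : w.drop (a + n) = (w.drop a).drop n := by
    rw [List.drop_drop, Nat.add_comm]
  rw [hd, ← List.take_add]

lemma seg_infix {α : Type*} (w : List α) (a n : ℕ) :
    (w.drop a).take n <:+: w :=
  (List.take_prefix n (w.drop a)).isInfix.trans (w.drop_suffix a).isInfix

lemma seg_eq {α : Type*} (w : List α) (a b n : ℕ) (ha : a + n ≤ w.length)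
    (hb : b + n ≤ w.length)
    (h : ∀ r, r < n → ∀ (h1 : a + r < w.length) (h2 : b + r < w.length),
      w[a + r] = w[b + r]) :
    (w.drop a).take n = (w.drop b).take n := by
  apply List.ext_getElem
  · rw [seg_len w a n ha, seg_len w b n hb]
  · intro r h1 h2
    rw [seg_len w a n ha] at h1
    simp only [List.getElem_take, List.getElem_drop]
    exact h r h1 (by omega) (by omega)

theorem split_overlap_bound (k t M N : ℕ) (hk : 1 ≤ k) (ht : 1 ≤ t) (hM : t ≤ M)
    (h1 : ∀ w : List (Fin k), M < w.length →
      ∃ x : List (Fin k), x.length = t ∧ TwoDisjointOccs x w)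
    (h2 : ∀ w : List (Fin k), N < w.length →
      ∃ x : List (Fin k), x.length = M + 1 ∧ TwoDisjointOccs x w) :
    ∀ w : List (Fin k), N < w.length → HasSplitTOverlap t w := by
  intro w hw
  obtain ⟨x, hxlen, i, j, hxi, hxj, hij⟩ := h2 w hw
  obtain ⟨u, hulen, p, q, hup, huq, hpq⟩ := h1 x (by rw [hxlen]; omega)
  have hxne : x ≠ [] := by intro h; rw [h] at hxlen; simp at hxlen
  have hune : u ≠ [] := by intro h; rw [h] at hulen; simp at hulen; omega
  have hjx : j + (M + 1) ≤ w.length := by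
    have := occurs_len hxj hxne; omega
  have hquM : q + t ≤ M + 1 := by
    have := occurs_len huq hune; rw [hulen] at this; rw [hxlen] at this; omega
  have hpt : p + t ≤ q := by rw [hulen] at hpq; omega
  have hijM : i + (M + 1) ≤ j := by rw [hxlen] at hij; omega
  have key1 : ∀ r, r < q - p → ∀ (ha : i + p + r < w.length) (hb : j + p + r < w.length),
      w[i + p + r] = w[j + p + r] := by
    intro r hr ha hb
    have e1 := occurs_get hxi (p + r) (by omega) (by omega)
    have e2 := occurs_get hxj (p + r) (by omega) (by omega)
    simp only [Nat.add_assoc]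
    rw [← e1, ← e2]
  have key2 : ∀ r, r < t → ∀ (ha : i + p + r < w.length) (hb : j + q + r < w.length),
      w[i + p + r] = w[j + q + r] := by
    intro r hr ha hb
    have e1 := occurs_get hup r (by omega) (by omega)
    have e2 := occurs_get huq r (by omega) (by omega)
    have e3 := occurs_get hxi (p + r) (by omega) (by omega)
    have e4 := occurs_get hxj (q + r) (by omega) (by omega)
    simp only [Nat.add_assoc]
    rw [← e3, ← e1, e2, e4]
  refine ⟨(w.drop (i + p)).take (q - p), (w.drop (i + q)).take (j + p - (i + q)),
    (w.drop (j + p)).take (q - p + t), ?_, ?_⟩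
  · have sXY := seg_append w (i + p) (q - p) (j + p - (i + q))
    rw [show i + p + (q - p) = i + q from by omega] at sXY
    rw [sXY]
    have sYZ := seg_append w (i + p) (q - p + (j + p - (i + q))) (q - p + t)
    rw [show i + p + (q - p + (j + p - (i + q))) = j + p from by omega] at sYZ
    rw [sYZ]
    exact seg_infix w (i + p) _
  · refine ⟨(w.drop (i + p)).take (q - p), ?_, ?_, ?_⟩
    · have hl : ((w.drop (i + p)).take (q - p)).length = q - p :=
        seg_len w (i + p) (q - p) (by omega)
      intro h; rw [h] at hl; simp at hl; omega
    · rw [seg_len w (i + p) (q - p) (by omega)]; omega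
    · have hZ : (w.drop (j + p)).take (q - p + t) =
          (w.drop (j + p)).take (q - p) ++ (w.drop (j + q)).take t := by
        have hh := (seg_append w (j + p) (q - p) t).symm
        rw [show j + p + (q - p) = j + q from by omega] at hh
        exact hh
      have hCA : (w.drop (j + p)).take (q - p) = (w.drop (i + p)).take (q - p) :=
        seg_eq w (j + p) (i + p) (q - p) (by omega) (by omega)
          (fun r hr ha hb => (key1 r hr hb ha).symm)
      have hDA : (w.drop (j + q)).take t = ((w.drop (i + p)).take (q - p)).take t := by
        rw [List.take_take, min_eq_left (by omega : t ≤ q - p)]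
        exact seg_eq w (j + q) (i + p) t (by omega) (by omega)
          (fun r hr ha hb => (key2 r hr hb ha).symm)
      rw [hZ, hCA, hDA, List.append_assoc]
end
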